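/- Let D_H denote the number of nonzero vectors in F_{q^m}^t of Hamming weight at most k, and let D denote the number of nonzero elements of sum-rank weight at most k in the space F_q^{n x m} where n = (n_1,...,n_{t*},1,...,1) and m = (m_1,...,m_{t*},m',...,m') with t - t* trailing components of size 1 x m'. Then D_H' <= D <= q^{sum_{i=1}^{t*} n_i m_i} * D_H', where D_H' is the number of elements of F_{q^{m'}}^{t-t*} of Hamming weight at most k. -/

import Mathlib

open Matrix Module

lemma aux_rank_pos {R m n : Type*} [Field R] [Fintype n] {A : Matrix m n R}
    (h : A ≠ 0) : 1 ≤ A.rank := by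
  classical
  have hA : ∃ i j, A i j ≠ 0 := by
    by_contra hc
    push_neg at hc
    exact h (by ext i j; exact hc i j)
  obtain ⟨i, j, hij⟩ := hA
  rw [Matrix.rank, Nat.one_le_iff_ne_zero]
  have hnt : Nontrivial (LinearMap.range A.mulVecLin) := by
    refine ⟨⟨⟨A.mulVec (Pi.single j 1), ⟨Pi.single j 1, by simp [Matrix.mulVecLin_apply]⟩⟩, 0, ?_⟩⟩
    intro hcon
    apply hij
    have := congrFun (congrArg Subtype.val hcon) i
    simpa using this
  exact (Module.finrank_pos_iff.mpr hnt).ne'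

lemma aux_rank_rows_const {R m n : Type*} [Field R] [Fintype n] [Finite m]
    (A : Matrix m n R) (v : n → R) (h : ∀ i, A i = v) : A.rank ≤ 1 := by
  rw [Matrix.rank_eq_finrank_span_row]
  have hsub : Set.range A ⊆ {v} := by rintro _ ⟨i, rfl⟩; simp [h i]
  calc finrank R (Submodule.span R (Set.range A))
      ≤ finrank R (Submodule.span R ({v} : Set (n → R))) :=
        Submodule.finrank_mono (Submodule.span_mono hsub)
    _ ≤ 1 := by simpa using finrank_span_le_card ({v} : Set (n → R))

/-- Let `D` be the number of nonzero elements of sum-rank weight at most `k` in the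
space `F_q^{n×m}` where `n = (n_1,…,n_{t*},1,…,1)` and `m = (m_1,…,m_{t*},m',…,m')`
(with `t - t*` trailing `1 × m'` components), and let `D_H'` be the number of elements
of `F_{q^{m'}}^{t-t*}` of Hamming weight at most `k`. Then
`D_H' ≤ D ≤ q^{∑_{i=1}^{t*} n_i m_i} · D_H'`. Here `E` plays the role of
`F_{q^{m'}}`, an extension of `K = F_q` with a basis indexed by `Fin m'`. -/
theorem ball_size_bounds_via_hamming {K E : Type*} [Field K] [Fintype K] [Field E]
    [Algebra K E] [Fintype E] [DecidableEq E] {q t tstar m' k : ℕ}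
    (hq : Fintype.card K = q) (b : Basis (Fin m') K E)
    (nn mm : Fin t → ℕ) (hts : 1 ≤ tstar) (htt : tstar ≤ t)
    (hn : ∀ i, 1 ≤ nn i) (hmn : ∀ i, nn i ≤ mm i)
    (htail : ∀ i : Fin t, tstar ≤ (i : ℕ) → nn i = 1 ∧ mm i = m')
    (hk : 1 ≤ k) :
    let D : ℕ := Nat.card {X : (i : Fin t) → Matrix (Fin (nn i)) (Fin (mm i)) K //
      X ≠ 0 ∧ ∑ i, (X i).rank ≤ k}
    let DH' : ℕ := Nat.card {x : Fin (t - tstar) → E // hammingNorm x ≤ k}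
    DH' ≤ D ∧
      D ≤ q ^ (∑ i ∈ Finset.univ.filter (fun i : Fin t => (i : ℕ) < tstar),
        nn i * mm i) * DH' := by
  classical
  intro D DH'
  have ht1 : 1 ≤ t := le_trans hts htt
  -- basic index bookkeeping
  set i0 : Fin t := ⟨0, by omega⟩ with hi0def
  have hi0 : (i0 : ℕ) < tstar := hts
  set idx : Fin (t - tstar) → Fin t := (fun j => ⟨tstar + (j : ℕ), by omega⟩) with hidxdef
  have hidx_le : ∀ j, tstar ≤ ((idx j : Fin t) : ℕ) := fun j => Nat.le_add_right _ _
  have hnn1 : ∀ j, nn (idx j) = 1 := fun j => (htail _ (hidx_le j)).1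
  have hmm' : ∀ j, mm (idx j) = m' := fun j => (htail _ (hidx_le j)).2
  have hidx_inj : Function.Injective idx := by
    intro a c h
    have := congrArg Fin.val h
    simp only [hidxdef] at this
    exact Fin.ext (by omega)
  have himage : Finset.univ.filter (fun i : Fin t => tstar ≤ (i : ℕ))
      = Finset.univ.image idx := by
    ext i
    simp only [Finset.mem_filter, Finset.mem_univ, true_and, Finset.mem_image]
    constructor
    · intro h
      exact ⟨⟨(i : ℕ) - tstar, by omega⟩, Fin.ext (by simp [hidxdef]; omega)⟩
    · rintro ⟨j, rfl⟩
      exact hidx_le j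
  -- the "tail" matrices associated to a vector over E
  set T : (Fin (t - tstar) → E) → ∀ i : Fin t, Matrix (Fin (nn i)) (Fin (mm i)) K :=
    (fun x i => if h : tstar ≤ (i : ℕ) then
      Matrix.of (fun _ c => b.repr (x ⟨(i : ℕ) - tstar, by omega⟩) (Fin.cast (htail i h).2 c))
    else 0) with hTdef
  have hThead : ∀ x (i : Fin t), (i : ℕ) < tstar → T x i = 0 := by
    intro x i h
    simp [hTdef, Nat.not_le.mpr h]
  have hTentry : ∀ x j (r : Fin (nn (idx j))) (c : Fin (mm (idx j))),
      T x (idx j) r c = b.repr (x j) (Fin.cast (hmm' j) c) := by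
    intro x j r c
    simp only [hTdef, dif_pos (hidx_le j), Matrix.of_apply]
    have e1 : (⟨((idx j : Fin t) : ℕ) - tstar, by have := j.isLt; have := (idx j).isLt; omega⟩ : Fin (t - tstar)) = j :=
      Fin.ext (by simp [hidxdef])
    rw [e1]
  have hTzero : ∀ x j, x j = 0 → T x (idx j) = 0 := by
    intro x j h
    ext r c
    rw [hTentry x j r c, h]
    simp
  have hTrank_le : ∀ x j, (T x (idx j)).rank ≤ 1 := by
    intro x j
    refine le_trans (Matrix.rank_le_card_height _) ?_
    simp [hnn1 j]
  have hTsum : ∀ x : Fin (t - tstar) → E, hammingNorm x ≤ k → ∑ i, (T x i).rank ≤ k := by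
    intro x hx
    have h1 : ∑ i, (T x i).rank
        = ∑ i ∈ Finset.univ.filter (fun i : Fin t => tstar ≤ (i : ℕ)), (T x i).rank := by
      rw [Finset.sum_filter]
      refine Finset.sum_congr rfl fun i _ => ?_
      by_cases h : tstar ≤ (i : ℕ)
      · rw [if_pos h]
      · rw [if_neg h, hThead x i (by omega), Matrix.rank_zero]
    have h2 : ∑ i ∈ Finset.univ.filter (fun i : Fin t => tstar ≤ (i : ℕ)), (T x i).rank
        = ∑ j, (T x (idx j)).rank := by
      rw [himage, Finset.sum_image (fun a _ c _ h => hidx_inj h)]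
    have h3 : ∑ j, (T x (idx j)).rank ≤ ∑ j, if x j ≠ 0 then 1 else 0 := by
      refine Finset.sum_le_sum fun j _ => ?_
      by_cases h : x j = 0
      · rw [hTzero x j h, Matrix.rank_zero]; simp
      · rw [if_pos h]; exact hTrank_le x j
    have h4 : (∑ j, if x j ≠ 0 then 1 else 0) = hammingNorm x := by
      rw [hammingNorm, Finset.card_filter]
    omega
  -- the special nonzero head element
  set Y : ∀ i : Fin t, Matrix (Fin (nn i)) (Fin (mm i)) K :=
    Function.update (0 : ∀ i : Fin t, Matrix (Fin (nn i)) (Fin (mm i)) K) i0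
      (Matrix.of fun _ _ => (1 : K)) with hYdef
  have hYi0 : Y i0 = Matrix.of fun _ _ => (1 : K) := Function.update_self _ _ _
  have hYother : ∀ i, i ≠ i0 → Y i = 0 := fun i h => Function.update_of_ne h _ _
  have hYne : Y ≠ 0 := by
    intro h
    have := congrFun (congrFun (congrFun h i0) ⟨0, hn i0⟩) ⟨0, lt_of_lt_of_le (hn i0) (hmn i0)⟩
    rw [hYi0] at this
    exact one_ne_zero this
  have hYsum : ∑ i, (Y i).rank ≤ k := by
    have : ∑ i, (Y i).rank = (Y i0).rank := by
      refine Finset.sum_eq_single i0 (fun i _ h => ?_) (fun h => absurd (Finset.mem_univ _) h)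
      rw [hYother i h, Matrix.rank_zero]
    rw [this, hYi0]
    exact le_trans (aux_rank_rows_const _ (fun _ => (1 : K)) (fun _ => rfl)) hk
  -- lower bound injection
  have h1 : DH' ≤ D := by
    have hf : ∃ f : {x : Fin (t - tstar) → E // hammingNorm x ≤ k} →
        {X : (i : Fin t) → Matrix (Fin (nn i)) (Fin (mm i)) K //
          X ≠ 0 ∧ ∑ i, (X i).rank ≤ k}, Function.Injective f := by
      refine ⟨fun p => if hx0 : p.1 = 0 then ⟨Y, hYne, hYsum⟩ else
        ⟨T p.1, ?_, hTsum p.1 p.2⟩, ?_⟩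
      · -- T p.1 ≠ 0
        intro hT0
        apply hx0
        funext j
        by_contra hxj
        have hrepr : b.repr (p.1 j) ≠ 0 := fun h => hxj (by
          have := congrArg b.repr.symm h
          simpa using this)
        obtain ⟨c, hc⟩ := Finsupp.ne_iff.mp hrepr
        simp only [Finsupp.coe_zero, Pi.zero_apply] at hc
        apply hc
        have := congrFun (congrFun (congrFun hT0 (idx j)) ⟨0, hn _⟩)
          (Fin.cast (hmm' j).symm c)
        rw [hTentry] at this
        simpa using this
      · intro p p' h
        dsimp only at h
        by_cases hp : p.1 = 0 <;> by_cases hp' : p'.1 = 0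
        · exact Subtype.ext (hp.trans hp'.symm)
        · exfalso
          rw [dif_pos hp, dif_neg hp', Subtype.mk.injEq] at h
          have h2 := congrFun h i0
          rw [hYi0, hThead p'.1 i0 hi0] at h2
          have := congrFun (congrFun h2 ⟨0, hn i0⟩) ⟨0, lt_of_lt_of_le (hn i0) (hmn i0)⟩
          exact one_ne_zero this
        · exfalso
          rw [dif_neg hp, dif_pos hp', Subtype.mk.injEq] at h
          have h2 := congrFun h i0
          rw [hYi0, hThead p.1 i0 hi0] at h2
          have := congrFun (congrFun h2 ⟨0, hn i0⟩) ⟨0, lt_of_lt_of_le (hn i0) (hmn i0)⟩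
          exact one_ne_zero this.symm
        · rw [dif_neg hp, dif_neg hp', Subtype.mk.injEq] at h
          have hT := h
          refine Subtype.ext (funext fun j => ?_)
          apply b.repr.injective
          ext c
          have := congrFun (congrFun (congrFun hT (idx j)) ⟨0, hn _⟩)
            (Fin.cast (hmm' j).symm c)
          rw [hTentry, hTentry] at this
          simpa using this
    obtain ⟨f, hf⟩ := hf
    exact Nat.card_le_card_of_injective f hf
  refine ⟨h1, ?_⟩
  clear h1
  -- upper bound injection
  set φ : ((i : Fin t) → Matrix (Fin (nn i)) (Fin (mm i)) K) → Fin (t - tstar) → E :=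
    (fun X j => b.equivFun.symm (fun c => X (idx j) ⟨0, hn _⟩ (Fin.cast (hmm' j).symm c)))
    with hφdef
  have hφsum : ∀ X : (i : Fin t) → Matrix (Fin (nn i)) (Fin (mm i)) K,
      ∑ i, (X i).rank ≤ k → hammingNorm (φ X) ≤ k := by
    intro X hX
    have h1 : hammingNorm (φ X) = ∑ j, if φ X j ≠ 0 then 1 else 0 := by
      rw [hammingNorm, Finset.card_filter]
    have h2 : ∀ j, (if φ X j ≠ 0 then 1 else 0) ≤ (X (idx j)).rank := by
      intro j
      by_cases h : φ X j = 0
      · simp [h]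
      · rw [if_pos h]
        apply aux_rank_pos
        intro h0
        apply h
        have hrow : (fun c => X (idx j) ⟨0, hn _⟩ (Fin.cast (hmm' j).symm c))
            = (0 : Fin m' → K) := by
          funext c
          rw [h0]
          rfl
        simp only [hφdef, hrow]
        exact map_zero _
    have h3 : ∑ j, (X (idx j)).rank ≤ ∑ i, (X i).rank := by
      rw [← Finset.sum_image (f := fun i => (X i).rank) (g := idx)
        (fun a _ c _ h => hidx_inj h), ← himage]
      exact Finset.sum_le_sum_of_subset (Finset.filter_subset _ _)
    have h4 := Finset.sum_le_sum (fun j (_ : j ∈ Finset.univ) => h2 j)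
    omega
  have hg : ∃ g : {X : (i : Fin t) → Matrix (Fin (nn i)) (Fin (mm i)) K //
        X ≠ 0 ∧ ∑ i, (X i).rank ≤ k} →
      ((i : {i : Fin t // (i : ℕ) < tstar}) → Matrix (Fin (nn i.1)) (Fin (mm i.1)) K) ×
      {x : Fin (t - tstar) → E // hammingNorm x ≤ k}, Function.Injective g := by
    refine ⟨fun p => (fun i => p.1 i.1, ⟨φ p.1, hφsum p.1 p.2.2⟩), ?_⟩
    intro p p' h
    dsimp only at h
    rw [Prod.mk.injEq] at h
    obtain ⟨ha, hb⟩ := h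
    have hbv : φ p.1 = φ p'.1 := congrArg Subtype.val hb
    refine Subtype.ext (funext fun i => ?_)
    by_cases hc : (i : ℕ) < tstar
    · exact congrFun ha ⟨i, hc⟩
    · have hle : tstar ≤ (i : ℕ) := Nat.not_lt.mp hc
      have hjlt : (i : ℕ) - tstar < t - tstar := by have := i.isLt; omega
      set j : Fin (t - tstar) := ⟨(i : ℕ) - tstar, hjlt⟩ with hjdef
      have hij : idx j = i := Fin.ext (by simp [hidxdef, hjdef]; omega)
      rw [← hij]
      have hrow := congrFun hbv j
      simp only [hφdef] at hrow
      have hrow' := b.equivFun.symm.injective hrow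
      ext r c
      have hrlt : (r : ℕ) < 1 := r.isLt.trans_le (hnn1 j).le
      have hr : r = ⟨0, hn (idx j)⟩ := Fin.ext (by simp; omega)
      rw [hr]
      have hthis := congrFun hrow' (Fin.cast (hmm' j) c)
      have hcc : Fin.cast (hmm' j).symm (Fin.cast (hmm' j) c) = c := Fin.ext (by simp)
      rw [hcc] at hthis
      exact hthis
  obtain ⟨g, hg⟩ := hg
  have hcard := Nat.card_le_card_of_injective g hg
  rw [Nat.card_prod] at hcard
  have hH : Nat.card ((i : {i : Fin t // (i : ℕ) < tstar}) →
        Matrix (Fin (nn i.1)) (Fin (mm i.1)) K)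
      = q ^ (∑ i ∈ Finset.univ.filter (fun i : Fin t => (i : ℕ) < tstar), nn i * mm i) := by
    rw [Nat.card_pi]
    have heach : ∀ i : {i : Fin t // (i : ℕ) < tstar},
        Nat.card (Matrix (Fin (nn i.1)) (Fin (mm i.1)) K) = q ^ (nn i.1 * mm i.1) := by
      intro i
      have hm : Nat.card (Matrix (Fin (nn i.1)) (Fin (mm i.1)) K)
          = Nat.card (Fin (nn i.1) → Fin (mm i.1) → K) := rfl
      rw [hm, Nat.card_fun, Nat.card_fun, Nat.card_eq_fintype_card (α := K), hq,
        Nat.card_eq_fintype_card, Nat.card_eq_fintype_card, Fintype.card_fin, Fintype.card_fin,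
        ← pow_mul, mul_comm]
    rw [Finset.prod_congr rfl (fun i _ => heach i), Finset.prod_pow_eq_pow_sum]
    congr 1
    rw [← Finset.sum_subtype_eq_sum_filter (fun i : Fin t => nn i * mm i)
      (p := fun i : Fin t => (i : ℕ) < tstar), Finset.subtype_univ]
  rw [hH] at hcard
  exact hcard
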